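/- (Corollary 9 of the paper: k-contraction of the nonlinear opinion dynamics model, compound-free form.) Let D = diag(d₁,…,dₙ), U = diag(u₁,…,uₙ) with u₁² ≥ u₂² ≥ ⋯ ≥ uₙ², let A ∈ ℝ^{n×n}, let f : ℝ → ℝ be continuously differentiable, and let k be an integer with 1 ≤ k ≤ n. Define α_k := (1/k)·min{ d_{i₁} + ⋯ + d_{i_k} : 1 ≤ i₁ < ⋯ < i_k ≤ n }, and for x ∈ ℝⁿ, J(x) := −D + U·diag(f'((Ax)₁), …, f'((Ax)ₙ))·A, the Jacobian of the opinion dynamics ẋ_i = −d_i x_i + u_i f((Ax)_i) + b_i. Assume α_k > 0 and that for all x in a convex set Ω ⊆ ℝⁿ, (max_i |f'((Ax)_i)|)² · Σ_{i=1}^k u_i² · s_i(A) < α_k² · k. Then for every x ∈ Ω and every k-frame V ∈ ℝ^{n×k}, tr(Vᵀ(J(x) + J(x)ᵀ)V) < 0; i.e., the sum of the k largest eigenvalues of J(x)+J(x)ᵀ is negative, so the model is k-contractive. -/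

import Mathlib

open Matrix Finset

/-- A `k`-frame in `ℝⁿ`: a matrix `V ∈ ℝ^{n×k}` with `VᵀV = I_k`. -/
def IsFrame {n k : ℕ} (V : Matrix (Fin n) (Fin k) ℝ) : Prop := Vᵀ * V = 1

/-- Rearrangement of a tuple in decreasing order. -/
noncomputable def sortedDesc {m : ℕ} (f : Fin m → ℝ) : Fin m → ℝ :=
  fun i => (f ∘ Tuple.sort f) i.rev

/-- The `i`-th largest squared singular value of a real matrix (the `i`-th largest
eigenvalue of `MᵀM`, counted with multiplicity), zero-indexed and padded by zero. -/
noncomputable def sqSingVal {n m : ℕ} (M : Matrix (Fin n) (Fin m) ℝ) (i : ℕ) : ℝ :=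
  if h : i < m then
    sortedDesc (show (Mᵀ * M).IsHermitian by
      simpa using Matrix.isHermitian_conjTranspose_mul_self M).eigenvalues ⟨i, h⟩
  else 0

lemma isHermT {n m : ℕ} (M : Matrix (Fin n) (Fin m) ℝ) : (Mᵀ * M).IsHermitian := by
  simpa using Matrix.isHermitian_conjTranspose_mul_self M

/-- Abel summation bound: if `lam` is antitone and nonnegative on `range N` and all prefix
sums of `x` are nonpositive, then `∑ lam i * x i ≤ 0`. -/
lemma abel_nat : ∀ (N : ℕ) (lam x : ℕ → ℝ),
    (∀ i j, i ≤ j → j < N → lam j ≤ lam i) →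
    (∀ i, i < N → 0 ≤ lam i) →
    (∀ j, j ≤ N → ∑ i ∈ Finset.range j, x i ≤ 0) →
    ∑ i ∈ Finset.range N, lam i * x i ≤ 0 := by
  intro N
  induction N with
  | zero => intro lam x _ _ _; simp
  | succ N ih =>
    intro lam x hmono hnn hpre
    have key : ∑ i ∈ Finset.range (N+1), lam i * x i
        = (∑ i ∈ Finset.range N, (lam i - lam N) * x i)
          + lam N * ∑ i ∈ Finset.range (N+1), x i := by
      rw [Finset.mul_sum, Finset.sum_range_succ (fun i => lam i * x i),
        Finset.sum_range_succ (fun i => lam N * x i)]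
      have : ∑ i ∈ Finset.range N, (lam i - lam N) * x i
          = ∑ i ∈ Finset.range N, (lam i * x i - lam N * x i) := by
        apply Finset.sum_congr rfl; intro i _; ring
      rw [this, Finset.sum_sub_distrib]
      ring
    rw [key]
    have h1 : ∑ i ∈ Finset.range N, (lam i - lam N) * x i ≤ 0 := by
      apply ih
      · intro i j hij hj; have := hmono i j hij (by omega); linarith
      · intro i hi
        have := hmono i N (by omega) (by omega); linarith
      · intro j hj; exact hpre j (by omega)
    have h2 : lam N * ∑ i ∈ Finset.range (N+1), x i ≤ 0 :=
      mul_nonpos_of_nonneg_of_nonpos (hnn N (by omega)) (hpre (N+1) le_rfl)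
    linarith

lemma range_sum_eq {n : ℕ} (g : Fin n → ℝ) (j : ℕ) (hj : j ≤ n) :
    ∑ i ∈ Finset.range j, (if h : i < n then g ⟨i, h⟩ else 0)
      = ∑ i ∈ Finset.univ.filter (fun i : Fin n => (i : ℕ) < j), g i := by
  refine Finset.sum_bij' (i := fun (a : ℕ) (ha : a ∈ Finset.range j) =>
      (⟨a, lt_of_lt_of_le (Finset.mem_range.1 ha) hj⟩ : Fin n))
    (j := fun (a : Fin n) (_ : a ∈ Finset.univ.filter (fun i : Fin n => (i : ℕ) < j)) => (a : ℕ))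
    ?_ ?_ ?_ ?_ ?_ <;> intro a ha
  · simp only [Finset.mem_filter, Finset.mem_univ, true_and]; exact Finset.mem_range.1 ha
  · exact Finset.mem_range.2 (Finset.mem_filter.1 ha).2
  · rfl
  · rfl
  · exact dif_pos (lt_of_lt_of_le (Finset.mem_range.1 ha) hj)

lemma card_filter_lt {n : ℕ} (j : ℕ) (hj : j ≤ n) :
    (Finset.univ.filter (fun i : Fin n => (i : ℕ) < j)).card = j := by
  have := range_sum_eq (fun _ : Fin n => (1 : ℝ)) j hj
  simp only [Finset.sum_const, nsmul_eq_mul, mul_one, Finset.card_range] at this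
  have h2 : ∑ i ∈ Finset.range j, (if h : i < n then (1:ℝ) else 0) = (j : ℝ) := by
    rw [Finset.sum_congr rfl (fun i hi => dif_pos (lt_of_lt_of_le (Finset.mem_range.1 hi) hj))]
    simp
  rw [h2] at this
  exact_mod_cast this.symm

lemma abel_fin {n : ℕ} (lam c w : Fin n → ℝ)
    (hmono : ∀ i j : Fin n, i ≤ j → lam j ≤ lam i)
    (hnn : ∀ i, 0 ≤ lam i)
    (hpre : ∀ j : ℕ, j ≤ n →
      ∑ i ∈ Finset.univ.filter (fun i : Fin n => (i : ℕ) < j), c i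
        ≤ ∑ i ∈ Finset.univ.filter (fun i : Fin n => (i : ℕ) < j), w i) :
    ∑ i, lam i * c i ≤ ∑ i, lam i * w i := by
  have key := abel_nat n (fun i => if h : i < n then lam ⟨i, h⟩ else 0)
    (fun i => if h : i < n then c ⟨i, h⟩ - w ⟨i, h⟩ else 0) ?_ ?_ ?_
  · have h1 : ∑ i ∈ Finset.range n,
        ((fun i => if h : i < n then lam ⟨i, h⟩ else 0) i
          * (fun i => if h : i < n then c ⟨i, h⟩ - w ⟨i, h⟩ else 0) i)
        = ∑ i ∈ Finset.range n,
          (if h : i < n then lam ⟨i, h⟩ * (c ⟨i, h⟩ - w ⟨i, h⟩) else 0) := by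
      apply Finset.sum_congr rfl
      intro i hi
      have hin : i < n := Finset.mem_range.1 hi
      simp [hin]
    rw [h1, range_sum_eq (fun i => lam i * (c i - w i)) n le_rfl] at key
    have h2 : Finset.univ.filter (fun i : Fin n => (i : ℕ) < n) = Finset.univ := by
      apply Finset.filter_true_of_mem; intro i _; exact i.isLt
    rw [h2] at key
    have h3 : ∑ i : Fin n, lam i * (c i - w i)
        = ∑ i : Fin n, lam i * c i - ∑ i : Fin n, lam i * w i := by
      rw [← Finset.sum_sub_distrib]; apply Finset.sum_congr rfl; intro i _; ring
    rw [h3] at key; linarith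
  · intro i j hij hj
    have hi : i < n := lt_of_le_of_lt hij hj
    simp only [dif_pos hi, dif_pos hj]
    exact hmono ⟨i, hi⟩ ⟨j, hj⟩ hij
  · intro i hi; simp only [dif_pos hi]; exact hnn _
  · intro j hj
    rw [range_sum_eq (fun i => c i - w i) j hj, Finset.sum_sub_distrib]
    have := hpre j hj; linarith

lemma sortedDesc_eq_comp {n : ℕ} (lam : Fin n → ℝ) :
    sortedDesc lam = fun i => lam ((Fin.revPerm.trans (Tuple.sort lam)) i) := rfl

lemma sortedDesc_anti {n : ℕ} (lam : Fin n → ℝ) :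
    ∀ i j : Fin n, i ≤ j → sortedDesc lam j ≤ sortedDesc lam i := by
  intro i j hij
  exact Tuple.monotone_sort lam (Fin.rev_le_rev.2 hij)

lemma sortedDesc_nonneg {n : ℕ} (lam : Fin n → ℝ) (hl : ∀ i, 0 ≤ lam i) (i : Fin n) :
    0 ≤ sortedDesc lam i := hl _

/-- Ky Fan type bound: if `0 ≤ c ≤ 1` pointwise and `∑ c ≤ k`, `lam ≥ 0`, then
`∑ lam i * c i` is at most the sum of the `k` largest values of `lam`. -/
lemma kyfan {n k : ℕ} (hkn : k ≤ n) (lam c : Fin n → ℝ)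
    (hl : ∀ i, 0 ≤ lam i) (hc0 : ∀ i, 0 ≤ c i) (hc1 : ∀ i, c i ≤ 1)
    (hsum : ∑ i, c i ≤ (k : ℝ)) :
    ∑ i, lam i * c i
      ≤ ∑ i ∈ Finset.univ.filter (fun i : Fin n => (i : ℕ) < k), sortedDesc lam i := by
  set σ : Equiv.Perm (Fin n) := Fin.revPerm.trans (Tuple.sort lam) with hσ
  have h1 : ∑ i, lam i * c i = ∑ i, sortedDesc lam i * c (σ i) := by
    rw [sortedDesc_eq_comp]
    exact (Equiv.sum_comp σ (fun i => lam i * c i)).symm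
  rw [h1]
  have key := abel_fin (sortedDesc lam) (fun i => c (σ i))
      (fun i => if (i : ℕ) < k then 1 else 0) (sortedDesc_anti lam)
      (sortedDesc_nonneg lam hl) ?_
  · calc ∑ i, sortedDesc lam i * c (σ i)
        ≤ ∑ i, sortedDesc lam i * (if (i : ℕ) < k then 1 else 0) := key
      _ = ∑ i ∈ Finset.univ.filter (fun i : Fin n => (i : ℕ) < k), sortedDesc lam i := by
          rw [Finset.sum_filter]
          apply Finset.sum_congr rfl
          intro i _
          by_cases h : (i : ℕ) < k <;> simp [h]
  · intro j hj
    by_cases hjk : j ≤ k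
    · have hle : ∑ i ∈ Finset.univ.filter (fun i : Fin n => (i : ℕ) < j), c (σ i)
          ≤ ∑ i ∈ Finset.univ.filter (fun i : Fin n => (i : ℕ) < j), (1 : ℝ) :=
        Finset.sum_le_sum (fun i _ => hc1 _)
      have heq : ∀ i ∈ Finset.univ.filter (fun i : Fin n => (i : ℕ) < j),
          (if (i : ℕ) < k then (1:ℝ) else 0) = 1 := by
        intro i hi
        have : (i : ℕ) < j := (Finset.mem_filter.1 hi).2
        rw [if_pos (by omega)]
      rw [Finset.sum_congr rfl heq]
      exact hle
    · push_neg at hjk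
      have h2 : ∑ i ∈ Finset.univ.filter (fun i : Fin n => (i : ℕ) < j), c (σ i)
          ≤ ∑ i : Fin n, c (σ i) :=
        Finset.sum_le_sum_of_subset_of_nonneg (Finset.subset_univ _) (fun i _ _ => hc0 _)
      have h3 : ∑ i : Fin n, c (σ i) = ∑ i, c i := Equiv.sum_comp σ c
      have h4 : ∑ i ∈ Finset.univ.filter (fun i : Fin n => (i : ℕ) < j),
          (if (i : ℕ) < k then (1:ℝ) else 0) = (k : ℝ) := by
        rw [← Finset.sum_filter, Finset.filter_filter]
        have : Finset.filter (fun i : Fin n => (i : ℕ) < j ∧ (i : ℕ) < k) Finset.univ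
            = Finset.filter (fun i : Fin n => (i : ℕ) < k) Finset.univ := by
          apply Finset.filter_congr
          intro i _
          constructor
          · exact fun h => h.2
          · exact fun h => ⟨by omega, h⟩
        rw [this, Finset.sum_const, card_filter_lt k hkn]
        simp
      rw [h4]
      calc _ ≤ ∑ i : Fin n, c (σ i) := h2
        _ = ∑ i, c i := h3
        _ ≤ (k : ℝ) := hsum

/-- Subset version of the Ky Fan bound. -/
lemma kyfan_subset {n k : ℕ} (hkn : k ≤ n) (lam c : Fin n → ℝ)
    (hl : ∀ i, 0 ≤ lam i) (hc0 : ∀ i, 0 ≤ c i) (hc1 : ∀ i, c i ≤ 1)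
    (hsum : ∑ i, c i ≤ (k : ℝ)) :
    ∃ S : Finset (Fin n), S.card = k ∧ ∑ i, lam i * c i ≤ ∑ i ∈ S, lam i := by
  set σ : Equiv.Perm (Fin n) := Fin.revPerm.trans (Tuple.sort lam) with hσ
  refine ⟨(Finset.univ.filter (fun i : Fin n => (i : ℕ) < k)).image σ, ?_, ?_⟩
  · rw [Finset.card_image_of_injective _ σ.injective, card_filter_lt k hkn]
  · rw [Finset.sum_image (fun x _ y _ h => σ.injective h)]
    exact kyfan hkn lam c hl hc0 hc1 hsum

/-- Diagonal entries of a symmetric idempotent matrix lie in `[0,1]`. -/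
lemma diag_idem {n : ℕ} (P : Matrix (Fin n) (Fin n) ℝ) (hsym : Pᵀ = P)
    (hid : P * P = P) (i : Fin n) : 0 ≤ P i i ∧ P i i ≤ 1 := by
  have h : P i i = ∑ j, (P i j) ^ 2 := by
    conv_lhs => rw [← hid]
    rw [Matrix.mul_apply]
    apply Finset.sum_congr rfl
    intro j _
    have : P j i = P i j := by
      conv_lhs => rw [← hsym]
      rfl
    rw [this]; ring
  have hnn : 0 ≤ P i i := h ▸ Finset.sum_nonneg (fun j _ => sq_nonneg _)
  have hsq : (P i i) ^ 2 ≤ P i i := by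
    conv_rhs => rw [h]
    exact Finset.single_le_sum (fun j _ => sq_nonneg (P i j)) (Finset.mem_univ i)
  exact ⟨hnn, by nlinarith⟩

/-- Trace of `Wᵀ * diagonal g * W` as a weighted sum of squared row norms of `W`. -/
lemma trace_tDw {n k : ℕ} (W : Matrix (Fin n) (Fin k) ℝ) (g : Fin n → ℝ) :
    (Wᵀ * Matrix.diagonal g * W).trace = ∑ i, g i * ∑ j, (W i j) ^ 2 := by
  rw [Matrix.trace]
  simp only [Matrix.diag_apply, Matrix.mul_apply, Matrix.transpose_apply,
    Matrix.diagonal_apply, Finset.sum_ite_eq, Finset.mem_univ, if_true]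
  rw [Finset.sum_comm]
  apply Finset.sum_congr rfl
  intro i _
  rw [Finset.mul_sum]
  apply Finset.sum_congr rfl
  intro j _
  rw [Finset.sum_eq_single i (fun x _ hx => by rw [if_neg hx, mul_zero])
    (fun h => absurd (Finset.mem_univ i) h)]
  rw [if_pos rfl]; ring

/-- Trace of `XᵀY` as an entrywise sum. -/
lemma trace_tmul {n k : ℕ} (X Y : Matrix (Fin n) (Fin k) ℝ) :
    (Xᵀ * Y).trace = ∑ i, ∑ j, X i j * Y i j := by
  rw [Matrix.trace]
  simp only [Matrix.diag_apply, Matrix.mul_apply, Matrix.transpose_apply]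
  rw [Finset.sum_comm]

/-- Contraction property of a frame: `‖Vᵀv‖² ≤ ‖v‖²`. -/
lemma proj_sum {n k : ℕ} (V : Matrix (Fin n) (Fin k) ℝ) (hV : Vᵀ * V = 1)
    (v : Fin n → ℝ) :
    ∑ m, (∑ s, v s * V s m) ^ 2 ≤ ∑ s, (v s) ^ 2 := by
  set w : Fin k → ℝ := fun m => ∑ s, v s * V s m with hw
  set Vw : Fin n → ℝ := fun s => ∑ m, V s m * w m with hVw
  have hVV : ∀ m m' : Fin k, ∑ s, V s m * V s m' = if m = m' then (1:ℝ) else 0 := by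
    intro m m'
    have : (Vᵀ * V) m m' = (1 : Matrix (Fin k) (Fin k) ℝ) m m' := by rw [hV]
    rw [Matrix.mul_apply] at this
    simpa [Matrix.one_apply, Matrix.transpose_apply] using this
  have hwsq : ∑ s, (Vw s) ^ 2 = ∑ m, (w m) ^ 2 := by
    simp only [hVw, sq]
    calc ∑ s, (∑ m, V s m * w m) * (∑ m', V s m' * w m')
        = ∑ s, ∑ m, ∑ m', (V s m * V s m') * (w m * w m') := by
          apply Finset.sum_congr rfl; intro s _
          rw [Finset.sum_mul_sum]
          apply Finset.sum_congr rfl; intro m _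
          apply Finset.sum_congr rfl; intro m' _; ring
      _ = ∑ m, ∑ m', (∑ s, V s m * V s m') * (w m * w m') := by
          rw [Finset.sum_comm]
          apply Finset.sum_congr rfl; intro m _
          rw [Finset.sum_comm]
          apply Finset.sum_congr rfl; intro m' _
          exact (Finset.sum_mul _ _ _).symm
      _ = ∑ m, w m * w m := by
          apply Finset.sum_congr rfl; intro m _
          rw [Finset.sum_eq_single m (fun m' _ hm' => by
              rw [hVV m m', if_neg (fun h => hm' h.symm), zero_mul])
            (fun h => absurd (Finset.mem_univ m) h)]
          rw [hVV m m, if_pos rfl]; ring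
  have hdot : ∑ m, (w m) ^ 2 = ∑ s, v s * Vw s := by
    simp only [hw, hVw]
    calc ∑ m, (∑ s, v s * V s m) ^ 2
        = ∑ m, (∑ s, v s * V s m) * w m := by
          apply Finset.sum_congr rfl; intro m _; rw [sq]
      _ = ∑ m, ∑ s, v s * V s m * w m := by
          apply Finset.sum_congr rfl; intro m _; rw [Finset.sum_mul]
      _ = ∑ s, ∑ m, v s * V s m * w m := by rw [Finset.sum_comm]
      _ = ∑ s, v s * ∑ m, V s m * w m := by
          apply Finset.sum_congr rfl; intro s _
          rw [Finset.mul_sum]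
          apply Finset.sum_congr rfl; intro m _; ring
  have hCS : (∑ s, v s * Vw s) ^ 2 ≤ (∑ s, (v s)^2) * (∑ s, (Vw s)^2) :=
    Finset.sum_mul_sq_le_sq_mul_sq Finset.univ v Vw
  set a : ℝ := ∑ m, (w m) ^ 2 with ha
  have hannn : 0 ≤ a := Finset.sum_nonneg (fun m _ => sq_nonneg _)
  have hbnn : 0 ≤ ∑ s, (v s)^2 := Finset.sum_nonneg (fun s _ => sq_nonneg _)
  -- a^2 ≤ (∑ v²) * a
  have : a ^ 2 ≤ (∑ s, (v s)^2) * a := by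
    calc a ^ 2 = (∑ s, v s * Vw s) ^ 2 := by rw [← hdot]
      _ ≤ (∑ s, (v s)^2) * (∑ s, (Vw s)^2) := hCS
      _ = (∑ s, (v s)^2) * a := by rw [hwsq]
  rcases eq_or_lt_of_le hannn with h0 | h0
  · rw [← h0]; exact hbnn
  · nlinarith

section spectral
variable {n : ℕ} (A : Matrix (Fin n) (Fin n) ℝ)

noncomputable def specQ : Matrix (Fin n) (Fin n) ℝ :=
  ((isHermT A).eigenvectorUnitary : Matrix (Fin n) (Fin n) ℝ)

lemma specQ_star : star (specQ A) = (specQ A)ᵀ := by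
  rw [Matrix.star_eq_conjTranspose, Matrix.conjTranspose_eq_transpose_of_trivial]

lemma specQ_left : (specQ A)ᵀ * specQ A = 1 := by
  rw [← specQ_star]
  exact Unitary.coe_star_mul_self ((isHermT A).eigenvectorUnitary)

lemma specQ_right : specQ A * (specQ A)ᵀ = 1 := by
  rw [← specQ_star]
  exact Unitary.coe_mul_star_self ((isHermT A).eigenvectorUnitary)

lemma specQ_diag :
    (specQ A)ᵀ * (Aᵀ * A) * specQ A
      = Matrix.diagonal ((isHermT A).eigenvalues) := by
  have h := Matrix.IsHermitian.conjStarAlgAut_star_eigenvectorUnitary (isHermT A)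
  rw [Unitary.conjStarAlgAut_star_apply] at h
  rw [← specQ_star]
  rw [show ((isHermT A).eigenvectorUnitary
      : Matrix (Fin n) (Fin n) ℝ) = specQ A from rfl] at h
  simpa [RCLike.ofReal_real_eq_id, Function.comp] using h

end spectral

section part3

variable {n k : ℕ}

/-- Frame version of the Ky Fan bound:
`∑ lam i * ‖(row i of W)‖² ≤` sum of `k` largest `lam` for an `n×k` frame `W`. -/
lemma frame_trace_bound (hkn : k ≤ n) (lam : Fin n → ℝ) (hl : ∀ i, 0 ≤ lam i)
    (W : Matrix (Fin n) (Fin k) ℝ) (hW : Wᵀ * W = 1) :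
    ∑ i, lam i * ∑ j, (W i j) ^ 2
      ≤ ∑ i ∈ Finset.univ.filter (fun i : Fin n => (i : ℕ) < k), sortedDesc lam i := by
  have hP : ∀ i, (W * Wᵀ) i i = ∑ j, (W i j) ^ 2 := by
    intro i
    rw [Matrix.mul_apply]
    apply Finset.sum_congr rfl
    intro j _
    rw [Matrix.transpose_apply, sq]
  have hsym : (W * Wᵀ)ᵀ = W * Wᵀ := by
    rw [Matrix.transpose_mul, Matrix.transpose_transpose]
  have hid : (W * Wᵀ) * (W * Wᵀ) = W * Wᵀ := by
    calc (W * Wᵀ) * (W * Wᵀ) = W * (Wᵀ * W) * Wᵀ := by simp only [Matrix.mul_assoc]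
      _ = W * Wᵀ := by rw [hW, Matrix.mul_one]
  have hbound := fun i => diag_idem (W * Wᵀ) hsym hid i
  have hsum : ∑ i, ∑ j, (W i j) ^ 2 = (k : ℝ) := by
    have h1 : (Wᵀ * W).trace = ∑ i, ∑ j, W i j * W i j := trace_tmul W W
    rw [hW, Matrix.trace_one] at h1
    simp only [Fintype.card_fin] at h1
    rw [h1]
    apply Finset.sum_congr rfl; intro i _
    apply Finset.sum_congr rfl; intro j _
    rw [sq]
  apply kyfan hkn lam _ hl
  · intro i; exact Finset.sum_nonneg (fun j _ => sq_nonneg _)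
  · intro i; rw [← hP i]; exact (hbound i).2
  · rw [hsum]

end part3

lemma weighted_singval_bound {n k : ℕ} (hkn : k ≤ n) (A : Matrix (Fin n) (Fin n) ℝ)
    (u : Fin n → ℝ) (hu : ∀ i j : Fin n, i ≤ j → u j ^ 2 ≤ u i ^ 2)
    (V : Matrix (Fin n) (Fin k) ℝ) (hV : Vᵀ * V = 1) :
    ∑ i, u i ^ 2 * ∑ m, ((A * V) i m) ^ 2
      ≤ ∑ i ∈ Finset.univ.filter (fun i : Fin n => (i : ℕ) < k),
          u i ^ 2 * sortedDesc (isHermT A).eigenvalues i := by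
  set lam : Fin n → ℝ := (isHermT A).eigenvalues with hlam
  have hlnn : ∀ t, 0 ≤ lam t := fun t => Matrix.eigenvalues_conjTranspose_mul_self_nonneg A t
  set Q : Matrix (Fin n) (Fin n) ℝ := specQ A with hQ
  have hQr : Q * Qᵀ = 1 := by rw [hQ]; exact specQ_right A
  have hQd : Qᵀ * (Aᵀ * A) * Q = Matrix.diagonal lam := by rw [hQ, hlam]; exact specQ_diag A
  have collapse : ∀ (m : ℕ) (X : Matrix (Fin n) (Fin m) ℝ), Q * (Qᵀ * X) = X := by
    intro m X; rw [← Matrix.mul_assoc, hQr, Matrix.one_mul]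
  set c' : Fin n → ℝ := fun i => ∑ m, ((A * V) i m) ^ 2 with hc'
  have hc'nn : ∀ i, 0 ≤ c' i := fun i => Finset.sum_nonneg fun m _ => sq_nonneg _
  -- the diagonalization of (A*Q)ᵀ(A*Q)
  have hAQdiag : (A * Q)ᵀ * (A * Q) = Matrix.diagonal lam := by
    rw [Matrix.transpose_mul, ← hQd]
    simp only [Matrix.mul_assoc]
  have hcol : ∀ t, ∑ i, ((A * Q) i t) ^ 2 = lam t := by
    intro t
    have h1 : ((A * Q)ᵀ * (A * Q)) t t = ∑ i, ((A * Q) i t) ^ 2 := by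
      rw [Matrix.mul_apply]
      apply Finset.sum_congr rfl; intro i _
      rw [Matrix.transpose_apply, sq]
    rw [← h1, hAQdiag, Matrix.diagonal_apply_eq]
  -- (a) total bound
  have ha : ∑ i, c' i
      ≤ ∑ t ∈ Finset.univ.filter (fun t : Fin n => (t : ℕ) < k), sortedDesc lam t := by
    have hWfr : (Qᵀ * V)ᵀ * (Qᵀ * V) = 1 := by
      rw [Matrix.transpose_mul, Matrix.transpose_transpose, Matrix.mul_assoc, collapse, hV]
    have h2 : (A * V)ᵀ * (A * V) = (Qᵀ * V)ᵀ * Matrix.diagonal lam * (Qᵀ * V) := by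
      rw [Matrix.transpose_mul, Matrix.transpose_mul, Matrix.transpose_transpose, ← hQd]
      simp only [Matrix.mul_assoc]
      rw [collapse, collapse]
    have h1 : ((A * V)ᵀ * (A * V)).trace = ∑ i, c' i := by
      rw [trace_tmul]
      apply Finset.sum_congr rfl; intro i _
      apply Finset.sum_congr rfl; intro m _
      rw [sq]
    rw [h2, trace_tDw] at h1
    rw [← h1]
    exact frame_trace_bound hkn lam hlnn (Qᵀ * V) hWfr
  -- (b) prefix bounds
  have hb : ∀ j : ℕ, j ≤ n →
      ∑ i ∈ Finset.univ.filter (fun i : Fin n => (i : ℕ) < j), c' i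
        ≤ ∑ t ∈ Finset.univ.filter (fun t : Fin n => (t : ℕ) < j), sortedDesc lam t := by
    intro j hj
    set F := Finset.univ.filter (fun i : Fin n => (i : ℕ) < j) with hF
    set r : Fin n → ℝ := fun i => ∑ s, (A i s) ^ 2 with hr
    have hcr : ∀ i, c' i ≤ r i := by
      intro i
      have hps := proj_sum V hV (fun s => A i s)
      have he : c' i = ∑ m, (∑ s, A i s * V s m) ^ 2 := by
        apply Finset.sum_congr rfl; intro m _
        rw [Matrix.mul_apply]
      rw [he, hr]
      exact hps
    have step1 : ∑ i ∈ F, c' i ≤ ∑ i ∈ F, r i := Finset.sum_le_sum (fun i _ => hcr i)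
    have hAQr : (A * Q) * (A * Q)ᵀ = A * Aᵀ := by
      rw [Matrix.transpose_mul]
      simp only [Matrix.mul_assoc]
      rw [collapse]
    have hri : ∀ i, r i = ∑ t, ((A * Q) i t) ^ 2 := by
      intro i
      have h1 : ((A * Q) * (A * Q)ᵀ) i i = ∑ t, ((A * Q) i t) ^ 2 := by
        rw [Matrix.mul_apply]
        apply Finset.sum_congr rfl; intro t _
        rw [Matrix.transpose_apply, sq]
      have h2 : (A * Aᵀ) i i = r i := by
        rw [Matrix.mul_apply, hr]
        apply Finset.sum_congr rfl; intro s _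
        rw [Matrix.transpose_apply, sq]
      rw [← h2, ← hAQr, h1]
    -- normalized matrix N
    set hfun : Fin n → ℝ := fun t => if lam t = 0 then 0 else (Real.sqrt (lam t))⁻¹ with hh
    set N : Matrix (Fin n) (Fin n) ℝ := (A * Q) * Matrix.diagonal hfun with hN
    have hNe : ∀ i t, N i t = (A * Q) i t * hfun t := by
      intro i t; rw [hN, Matrix.mul_diagonal]
    have hNz : ∀ i t, lam t = 0 → N i t = 0 := by
      intro i t h0; rw [hNe, hh]; simp [h0]
    set ε : Fin n → ℝ := fun t => if lam t = 0 then 0 else 1 with hε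
    have hval : ∀ t, lam t ≠ 0 → (hfun t) ^ 2 * lam t = 1 := by
      intro t h0
      have hpos : 0 < lam t := lt_of_le_of_ne (hlnn t) (Ne.symm h0)
      rw [hh]
      simp only [if_neg h0]
      rw [inv_pow, Real.sq_sqrt hpos.le]
      exact inv_mul_cancel₀ h0
    have hNcol : ∀ t, ∑ i, (N i t) ^ 2 = ε t := by
      intro t
      by_cases h0 : lam t = 0
      · rw [hε]
        simp only [if_pos h0]
        apply Finset.sum_eq_zero; intro i _
        rw [hNz i t h0]; ring
      · have heq : ∑ i, (N i t) ^ 2 = (hfun t) ^ 2 * ∑ i, ((A * Q) i t) ^ 2 := by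
          rw [Finset.mul_sum]
          apply Finset.sum_congr rfl; intro i _
          rw [hNe]; ring
        rw [heq, hcol t, hval t h0, hε]
        simp [h0]
    have hNN : Nᵀ * N = Matrix.diagonal ε := by
      rw [hN, Matrix.transpose_mul, Matrix.diagonal_transpose]
      calc Matrix.diagonal hfun * (A * Q)ᵀ * ((A * Q) * Matrix.diagonal hfun)
          = Matrix.diagonal hfun * ((A * Q)ᵀ * (A * Q)) * Matrix.diagonal hfun := by
            simp only [Matrix.mul_assoc]
        _ = Matrix.diagonal hfun * Matrix.diagonal lam * Matrix.diagonal hfun := by rw [hAQdiag]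
        _ = Matrix.diagonal ε := by
            rw [Matrix.diagonal_mul_diagonal, Matrix.diagonal_mul_diagonal]
            have hfe : (fun t => hfun t * lam t * hfun t) = ε := by
              funext t
              by_cases h0 : lam t = 0
              · rw [hε]
                simp [h0]
              · rw [hε]
                simp only [if_neg h0]
                have h2 : hfun t * lam t * hfun t = hfun t ^ 2 * lam t := by ring
                rw [h2, hval t h0]
            rw [hfe]
    have hNeps : N * Matrix.diagonal ε = N := by
      ext i t
      rw [Matrix.mul_diagonal]
      by_cases h0 : lam t = 0
      · rw [hNz i t h0]; simp
      · rw [hε]; simp [h0]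
    have hNid : (N * Nᵀ) * (N * Nᵀ) = N * Nᵀ := by
      calc (N * Nᵀ) * (N * Nᵀ) = N * (Nᵀ * N) * Nᵀ := by simp only [Matrix.mul_assoc]
        _ = N * Matrix.diagonal ε * Nᵀ := by rw [hNN]
        _ = N * Nᵀ := by rw [hNeps]
    have hNsym : (N * Nᵀ)ᵀ = N * Nᵀ := by
      rw [Matrix.transpose_mul, Matrix.transpose_transpose]
    have hrow : ∀ i, ∑ t, (N i t) ^ 2 ≤ 1 := by
      intro i
      have hP : (N * Nᵀ) i i = ∑ t, (N i t) ^ 2 := by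
        rw [Matrix.mul_apply]
        apply Finset.sum_congr rfl; intro t _
        rw [Matrix.transpose_apply, sq]
      rw [← hP]
      exact (diag_idem (N * Nᵀ) hNsym hNid i).2
    set cc : Fin n → ℝ := fun t => ∑ i ∈ F, (N i t) ^ 2 with hcc
    have hcc0 : ∀ t, 0 ≤ cc t := fun t => Finset.sum_nonneg fun i _ => sq_nonneg _
    have hcc1 : ∀ t, cc t ≤ 1 := by
      intro t
      have h1 : cc t ≤ ∑ i, (N i t) ^ 2 :=
        Finset.sum_le_sum_of_subset_of_nonneg (Finset.subset_univ _)
          (fun i _ _ => sq_nonneg _)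
      rw [hNcol t] at h1
      refine h1.trans ?_
      rw [hε]
      by_cases h0 : lam t = 0 <;> simp [h0]
    have hccsum : ∑ t, cc t ≤ (j : ℝ) := by
      have h1 : ∑ t, cc t = ∑ i ∈ F, ∑ t, (N i t) ^ 2 := Finset.sum_comm
      rw [h1]
      calc ∑ i ∈ F, ∑ t, (N i t) ^ 2 ≤ ∑ i ∈ F, (1 : ℝ) :=
            Finset.sum_le_sum (fun i _ => hrow i)
        _ = (F.card : ℝ) := by rw [Finset.sum_const]; simp
        _ = (j : ℝ) := by rw [hF, card_filter_lt j hj]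
    have hKF := kyfan hj lam cc hlnn hcc0 hcc1 hccsum
    have hlink : ∀ t, lam t * cc t = ∑ i ∈ F, ((A * Q) i t) ^ 2 := by
      intro t
      by_cases h0 : lam t = 0
      · rw [h0, zero_mul]
        symm
        have hle : ∑ i ∈ F, ((A * Q) i t) ^ 2 ≤ ∑ i, ((A * Q) i t) ^ 2 :=
          Finset.sum_le_sum_of_subset_of_nonneg (Finset.subset_univ _)
            (fun i _ _ => sq_nonneg _)
        rw [hcol t, h0] at hle
        have hge : 0 ≤ ∑ i ∈ F, ((A * Q) i t) ^ 2 :=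
          Finset.sum_nonneg fun i _ => sq_nonneg _
        linarith
      · have heq : cc t = (hfun t) ^ 2 * ∑ i ∈ F, ((A * Q) i t) ^ 2 := by
          rw [hcc, Finset.mul_sum]
          apply Finset.sum_congr rfl; intro i _
          rw [hNe]; ring
        rw [heq, ← mul_assoc]
        rw [show lam t * hfun t ^ 2 = hfun t ^ 2 * lam t from mul_comm _ _, hval t h0, one_mul]
    have step2 : ∑ i ∈ F, r i = ∑ t, lam t * cc t := by
      have h1 : ∑ i ∈ F, r i = ∑ i ∈ F, ∑ t, ((A * Q) i t) ^ 2 :=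
        Finset.sum_congr rfl (fun i _ => hri i)
      rw [h1, Finset.sum_comm]
      apply Finset.sum_congr rfl
      intro t _
      exact (hlink t).symm
    calc ∑ i ∈ F, c' i ≤ ∑ i ∈ F, r i := step1
      _ = ∑ t, lam t * cc t := step2
      _ ≤ _ := hKF
  -- combine via Abel
  have final := abel_fin (fun i => u i ^ 2) c'
    (fun i => if (i : ℕ) < k then sortedDesc lam i else 0)
    (fun i j hij => hu i j hij) (fun i => sq_nonneg _) ?_
  · calc ∑ i, u i ^ 2 * c' i
        ≤ ∑ i, u i ^ 2 * (if (i : ℕ) < k then sortedDesc lam i else 0) := final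
      _ = ∑ i ∈ Finset.univ.filter (fun i : Fin n => (i : ℕ) < k),
            u i ^ 2 * sortedDesc lam i := by
          rw [Finset.sum_filter]
          apply Finset.sum_congr rfl
          intro i _
          by_cases h : (i : ℕ) < k <;> simp [h]
  · intro j hj
    by_cases hjk : j ≤ k
    · have heq : ∀ i ∈ Finset.univ.filter (fun i : Fin n => (i : ℕ) < j),
          (if (i : ℕ) < k then sortedDesc lam i else 0) = sortedDesc lam i := by
        intro i hi
        have : (i : ℕ) < j := (Finset.mem_filter.1 hi).2
        rw [if_pos (by omega)]
      rw [Finset.sum_congr rfl heq]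
      exact hb j hj
    · push_neg at hjk
      have h2 : ∑ i ∈ Finset.univ.filter (fun i : Fin n => (i : ℕ) < j), c' i
          ≤ ∑ i, c' i :=
        Finset.sum_le_sum_of_subset_of_nonneg (Finset.subset_univ _) (fun i _ _ => hc'nn _)
      have h4 : ∑ i ∈ Finset.univ.filter (fun i : Fin n => (i : ℕ) < j),
          (if (i : ℕ) < k then sortedDesc lam i else 0)
          = ∑ t ∈ Finset.univ.filter (fun t : Fin n => (t : ℕ) < k), sortedDesc lam t := by
        rw [← Finset.sum_filter, Finset.filter_filter]
        apply Finset.sum_congr ?_ (fun x _ => rfl)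
        apply Finset.filter_congr
        intro i _
        constructor
        · exact fun h => h.2
        · exact fun h => ⟨by omega, h⟩
      rw [h4]
      exact le_trans h2 ha

/-- Row-norm facts for a frame. -/
lemma frame_diag_bounds {n k : ℕ} (V : Matrix (Fin n) (Fin k) ℝ) (hV : Vᵀ * V = 1) :
    (∀ i, ∑ j, (V i j) ^ 2 ≤ 1) ∧ ∑ i, ∑ j, (V i j) ^ 2 = (k : ℝ) := by
  have hP : ∀ i, (V * Vᵀ) i i = ∑ j, (V i j) ^ 2 := by
    intro i
    rw [Matrix.mul_apply]
    apply Finset.sum_congr rfl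
    intro j _
    rw [Matrix.transpose_apply, sq]
  have hsym : (V * Vᵀ)ᵀ = V * Vᵀ := by
    rw [Matrix.transpose_mul, Matrix.transpose_transpose]
  have hid : (V * Vᵀ) * (V * Vᵀ) = V * Vᵀ := by
    calc (V * Vᵀ) * (V * Vᵀ) = V * (Vᵀ * V) * Vᵀ := by simp only [Matrix.mul_assoc]
      _ = V * Vᵀ := by rw [hV, Matrix.mul_one]
  constructor
  · intro i
    rw [← hP i]
    exact (diag_idem (V * Vᵀ) hsym hid i).2
  · have h1 : (Vᵀ * V).trace = ∑ i, ∑ j, V i j * V i j := trace_tmul V V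
    rw [hV, Matrix.trace_one] at h1
    simp only [Fintype.card_fin] at h1
    rw [h1]
    apply Finset.sum_congr rfl; intro i _
    apply Finset.sum_congr rfl; intro j _
    rw [sq]

/-- The `d`-side lower bound. -/
lemma dside {n k : ℕ} (hk1 : 1 ≤ k) (hkn : k ≤ n) (d : Fin n → ℝ) (αk : ℝ)
    (hαk : IsLeast {s : ℝ | ∃ I : Finset (Fin n), I.card = k ∧ ∑ i ∈ I, d i = s}
      ((k : ℝ) * αk))
    (V : Matrix (Fin n) (Fin k) ℝ) (hV : Vᵀ * V = 1) :
    (k : ℝ) * αk ≤ ∑ i, d i * ∑ j, (V i j) ^ 2 := by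
  have hn1 : 1 ≤ n := le_trans hk1 hkn
  have hne : (Finset.univ : Finset (Fin n)).Nonempty := ⟨⟨0, by omega⟩, Finset.mem_univ _⟩
  set B : ℝ := Finset.univ.sup' hne d with hB
  set c : Fin n → ℝ := fun i => ∑ j, (V i j) ^ 2 with hc
  obtain ⟨hc1, hcsum⟩ := frame_diag_bounds V hV
  have hc0 : ∀ i, 0 ≤ c i := fun i => Finset.sum_nonneg fun j _ => sq_nonneg _
  have hlnn : ∀ i, 0 ≤ B - d i := by
    intro i
    have : d i ≤ B := Finset.le_sup' d (Finset.mem_univ i)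
    linarith
  obtain ⟨S, hScard, hSle⟩ := kyfan_subset hkn (fun i => B - d i) c hlnn hc0 hc1 (le_of_eq hcsum)
  have hLHS : ∑ i, (B - d i) * c i = B * (k : ℝ) - ∑ i, d i * c i := by
    have h1 : ∑ i, (B - d i) * c i = ∑ i, (B * c i - d i * c i) := by
      apply Finset.sum_congr rfl; intro i _; ring
    rw [h1, Finset.sum_sub_distrib, ← Finset.mul_sum, hcsum]
  have hRHS : ∑ i ∈ S, (B - d i) = (k : ℝ) * B - ∑ i ∈ S, d i := by
    rw [Finset.sum_sub_distrib, Finset.sum_const, hScard, nsmul_eq_mul]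
  have hmem : (k : ℝ) * αk ≤ ∑ i ∈ S, d i := hαk.2 ⟨S, hScard, rfl⟩
  rw [hLHS, hRHS] at hSle
  linarith

lemma filter_sum_castLE {n k : ℕ} (hkn : k ≤ n) (G : Fin n → ℝ) :
    ∑ i ∈ Finset.univ.filter (fun i : Fin n => (i : ℕ) < k), G i
      = ∑ i : Fin k, G (Fin.castLE hkn i) := by
  refine Finset.sum_bij' (i := fun (a : Fin n) (ha : a ∈ Finset.univ.filter
        (fun i : Fin n => (i : ℕ) < k)) => (⟨(a : ℕ), (Finset.mem_filter.1 ha).2⟩ : Fin k))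
    (j := fun (a : Fin k) (_ : a ∈ Finset.univ) => Fin.castLE hkn a)
    ?_ ?_ ?_ ?_ ?_ <;> intro a ha
  · exact Finset.mem_univ _
  · simp only [Finset.mem_filter, Finset.mem_univ, true_and]
    exact a.isLt
  · rfl
  · rfl
  · rfl

/-- **Corollary 9 of the paper: `k`-contraction of the nonlinear opinion dynamics model,
compound-free form.** Consider `ẋᵢ = −dᵢxᵢ + uᵢ f((Ax)ᵢ) + bᵢ` with `u₁² ≥ ⋯ ≥ uₙ²`,
`f` continuously differentiable, and Jacobian
`J(x) = −D + U·diag(f'((Ax)₁),…,f'((Ax)ₙ))·A`.  Let `α_k` be `1/k` times the minimal sum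
of `k` of the `dᵢ`'s (expressed via `IsLeast`).  If `α_k > 0` and
`(maxᵢ|f'((Ax)ᵢ)|)² Σ_{i=1}^k uᵢ² s_i(A) < α_k²k` on the convex set `Ω`, then
`tr(Vᵀ(J(x)+J(x)ᵀ)V) < 0` for every `x ∈ Ω` and every `k`-frame `V`, so the model is
`k`-contractive. -/
theorem opinion_dynamics_k_contraction {n : ℕ} (k : ℕ) (hk1 : 1 ≤ k) (hkn : k ≤ n)
    (d u : Fin n → ℝ) (hu : ∀ i j : Fin n, i ≤ j → u j ^ 2 ≤ u i ^ 2)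
    (A : Matrix (Fin n) (Fin n) ℝ) (b : Fin n → ℝ)
    (f : ℝ → ℝ) (hf : ContDiff ℝ 1 f)
    (Ω : Set (Fin n → ℝ)) (hΩ : Convex ℝ Ω)
    (αk : ℝ)
    (hαk : IsLeast {s : ℝ | ∃ I : Finset (Fin n), I.card = k ∧ ∑ i ∈ I, d i = s}
      ((k : ℝ) * αk))
    (hα : 0 < αk)
    (hgain : ∀ x ∈ Ω,
      (Finset.univ.sup' ⟨(⟨0, by omega⟩ : Fin n), Finset.mem_univ _⟩
          fun i => |deriv f ((A *ᵥ x) i)|) ^ 2 *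
        ∑ i : Fin k, u (Fin.castLE hkn i) ^ 2 * sqSingVal A i < αk ^ 2 * k) :
    ∀ x ∈ Ω, ∀ V : Matrix (Fin n) (Fin k) ℝ, IsFrame V →
      (Vᵀ * ((-(Matrix.diagonal d)
          + Matrix.diagonal u * Matrix.diagonal (fun i => deriv f ((A *ᵥ x) i)) * A)
        + (-(Matrix.diagonal d)
          + Matrix.diagonal u * Matrix.diagonal (fun i => deriv f ((A *ᵥ x) i)) * A)ᵀ)
        * V).trace < 0 := by
  intro x hx V hV
  rw [IsFrame] at hV
  set φ : Fin n → ℝ := fun i => deriv f ((A *ᵥ x) i) with hφ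
  set L : ℝ := Finset.univ.sup' ⟨(⟨0, by omega⟩ : Fin n), Finset.mem_univ _⟩
      (fun i => |φ i|) with hL
  set g : Fin n → ℝ := fun i => u i * φ i with hg
  set M : Matrix (Fin n) (Fin n) ℝ := Matrix.diagonal u * Matrix.diagonal φ * A with hM
  set J : Matrix (Fin n) (Fin n) ℝ := -(Matrix.diagonal d) + M with hJ
  -- reduce to (Vᵀ J V).trace < 0
  have hgoal : (Vᵀ * (J + Jᵀ) * V).trace = 2 * (Vᵀ * J * V).trace := by
    have h1 : Vᵀ * (J + Jᵀ) * V = Vᵀ * J * V + Vᵀ * Jᵀ * V := by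
      rw [Matrix.mul_add, Matrix.add_mul]
    have h2 : (Vᵀ * Jᵀ * V).trace = (Vᵀ * J * V).trace := by
      have h3 : Vᵀ * Jᵀ * V = (Vᵀ * J * V)ᵀ := by
        rw [Matrix.transpose_mul, Matrix.transpose_mul, Matrix.transpose_transpose,
          Matrix.mul_assoc]
      rw [h3, Matrix.trace_transpose]
    rw [h1, Matrix.trace_add, h2]
    ring
  rw [hgoal]
  have hsplit : (Vᵀ * J * V).trace
      = -(Vᵀ * Matrix.diagonal d * V).trace + (Vᵀ * M * V).trace := by
    have h1 : Vᵀ * J * V = -(Vᵀ * Matrix.diagonal d * V) + Vᵀ * M * V := by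
      rw [hJ, Matrix.mul_add, Matrix.add_mul]
      congr 1
      rw [Matrix.mul_neg, Matrix.neg_mul]
    rw [h1, Matrix.trace_add, Matrix.trace_neg]
  -- d part
  have hd : (k : ℝ) * αk ≤ (Vᵀ * Matrix.diagonal d * V).trace := by
    rw [trace_tDw]
    exact dside hk1 hkn d αk hαk V hV
  -- M part
  have hMV : M * V = Matrix.diagonal g * (A * V) := by
    rw [hM, hg, ← Matrix.diagonal_mul_diagonal]
    simp only [Matrix.mul_assoc]
  have hMVe : ∀ i m, (M * V) i m = g i * (A * V) i m := by
    intro i m; rw [hMV, Matrix.diagonal_mul]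
  set c' : Fin n → ℝ := fun i => ∑ m, ((A * V) i m) ^ 2 with hc'
  have hc'nn : ∀ i, 0 ≤ c' i := fun i => Finset.sum_nonneg fun m _ => sq_nonneg _
  set T : ℝ := ∑ i : Fin k, u (Fin.castLE hkn i) ^ 2 * sqSingVal A i with hT
  have hgx : L ^ 2 * T < αk ^ 2 * k := hgain x hx
  have hφL : ∀ i, φ i ^ 2 ≤ L ^ 2 := by
    intro i
    have h1 : |φ i| ≤ L := Finset.le_sup' (fun i => |φ i|) (Finset.mem_univ i)
    have h2 : 0 ≤ |φ i| := abs_nonneg _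
    nlinarith [sq_abs (φ i)]
  have hLnn : 0 ≤ L := le_trans (abs_nonneg _)
    (Finset.le_sup' (fun i => |φ i|) (Finset.mem_univ ⟨0, by omega⟩))
  -- trace of M part squared bound
  have hMtrsq : ((M * V)ᵀ * (M * V)).trace ≤ L ^ 2 * T := by
    have h1 : ((M * V)ᵀ * (M * V)).trace = ∑ i, g i ^ 2 * c' i := by
      rw [trace_tmul]
      apply Finset.sum_congr rfl; intro i _
      rw [hc']
      simp only
      rw [Finset.mul_sum]
      apply Finset.sum_congr rfl; intro m _
      rw [hMVe]; ring
    have h2 : ∑ i, g i ^ 2 * c' i ≤ ∑ i, L ^ 2 * (u i ^ 2 * c' i) := by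
      apply Finset.sum_le_sum
      intro i _
      have : g i ^ 2 = u i ^ 2 * φ i ^ 2 := by rw [hg]; ring
      rw [this]
      calc u i ^ 2 * φ i ^ 2 * c' i = φ i ^ 2 * (u i ^ 2 * c' i) := by ring
        _ ≤ L ^ 2 * (u i ^ 2 * c' i) :=
            mul_le_mul_of_nonneg_right (hφL i) (mul_nonneg (sq_nonneg _) (hc'nn i))
    have h3 : ∑ i, L ^ 2 * (u i ^ 2 * c' i) = L ^ 2 * ∑ i, u i ^ 2 * c' i := by
      rw [Finset.mul_sum]
    have h4 := weighted_singval_bound hkn A u hu V hV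
    have h5 : ∑ i ∈ Finset.univ.filter (fun i : Fin n => (i : ℕ) < k),
        u i ^ 2 * sortedDesc (isHermT A).eigenvalues i = T := by
      rw [filter_sum_castLE hkn]
      apply Finset.sum_congr rfl
      intro i _
      congr 1
      rw [sqSingVal, dif_pos (lt_of_lt_of_le i.isLt hkn)]
      rfl
    rw [h1]
    calc ∑ i, g i ^ 2 * c' i ≤ L ^ 2 * ∑ i, u i ^ 2 * c' i := by rw [← h3]; exact h2
      _ ≤ L ^ 2 * T := by
          rw [← h5]
          exact mul_le_mul_of_nonneg_left h4 (by positivity)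
  -- Cauchy-Schwarz
  have hCS : ((Vᵀ * M * V).trace) ^ 2 ≤ (k : ℝ) * ((M * V)ᵀ * (M * V)).trace := by
    have h1 : (Vᵀ * M * V).trace = ∑ p : Fin n × Fin k, V p.1 p.2 * (M * V) p.1 p.2 := by
      rw [Matrix.mul_assoc, trace_tmul]
      rw [Fintype.sum_prod_type]
    have h2 : ∑ p : Fin n × Fin k, (V p.1 p.2) ^ 2 = (k : ℝ) := by
      rw [Fintype.sum_prod_type]
      exact (frame_diag_bounds V hV).2
    have h3 : ∑ p : Fin n × Fin k, ((M * V) p.1 p.2) ^ 2 = ((M * V)ᵀ * (M * V)).trace := by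
      rw [trace_tmul, Fintype.sum_prod_type]
      apply Finset.sum_congr rfl; intro i _
      apply Finset.sum_congr rfl; intro m _
      rw [sq]
    have hcs := Finset.sum_mul_sq_le_sq_mul_sq Finset.univ
      (fun p : Fin n × Fin k => V p.1 p.2) (fun p : Fin n × Fin k => (M * V) p.1 p.2)
    rw [h1, ← h2, ← h3]
    exact hcs
  -- final arithmetic
  have hkpos : (0 : ℝ) < k := by exact_mod_cast hk1
  have hka : 0 < (k : ℝ) * αk := mul_pos hkpos hα
  have htr2 : ((Vᵀ * M * V).trace) ^ 2 < ((k : ℝ) * αk) ^ 2 := by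
    calc ((Vᵀ * M * V).trace) ^ 2 ≤ (k : ℝ) * ((M * V)ᵀ * (M * V)).trace := hCS
      _ ≤ (k : ℝ) * (L ^ 2 * T) := mul_le_mul_of_nonneg_left hMtrsq (le_of_lt hkpos)
      _ < (k : ℝ) * (αk ^ 2 * k) := by
          apply mul_lt_mul_of_pos_left hgx hkpos
      _ = ((k : ℝ) * αk) ^ 2 := by ring
  have htr : (Vᵀ * M * V).trace < (k : ℝ) * αk := by nlinarith
  rw [hsplit]
  nlinarith
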